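/- Let S = {(v,w) ∈ ℕ² : 0 ≤ v ≤ 2 and 0 ≤ w ≤ 2} index the degree-2 maximal order basis on the reference quadrilateral. Let M be the diagonal real S×S matrix with M_{(v,w),(v,w)} = 4/((2v+1)(2w+1)). For real parameters q0, q1, let Q be the symmetric S×S matrix whose only nonzero entries are Q_{(2,1),(2,1)} = Q_{(1,2),(1,2)} = q1, Q_{(2,2),(2,2)} = q0, and Q_{(2,0),(2,2)} = Q_{(2,2),(2,0)} = Q_{(0,2),(2,2)} = Q_{(2,2),(0,2)} = −3·q1. Then M + Q is positive definite if and only if q1 > −4/15 and 50·q0 − 1125·q1² + 8 > 0. -/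

import Mathlib

open Matrix


/-- Modal mass matrix of the degree-2 maximal order tensor-product Legendre basis:
`M_{(v,w),(v,w)} = 4/((2v+1)(2w+1))`. -/
noncomputable def massMO2 : Matrix (Fin 3 × Fin 3) (Fin 3 × Fin 3) ℝ :=
  Matrix.diagonal fun p =>
    (4 : ℝ) / (((2 * (p.1 : ℕ) + 1) * (2 * (p.2 : ℕ) + 1) : ℕ) : ℝ)

/-- The symmetric filter matrix `Q(q0, q1)` for the degree-2 maximal order basis. -/
def filterMO2 (q0 q1 : ℝ) : Matrix (Fin 3 × Fin 3) (Fin 3 × Fin 3) ℝ :=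
  fun i j =>
    if (i = (2, 1) ∧ j = (2, 1)) ∨ (i = (1, 2) ∧ j = (1, 2)) then q1
    else if i = (2, 2) ∧ j = (2, 2) then q0
    else if (i = (2, 0) ∧ j = (2, 2)) ∨ (i = (2, 2) ∧ j = (2, 0)) ∨
            (i = (0, 2) ∧ j = (2, 2)) ∨ (i = (2, 2) ∧ j = (0, 2)) then -3 * q1
    else 0

set_option maxHeartbeats 2000000 in
lemma quadformMO2 (q0 q1 : ℝ) (x : Fin 3 × Fin 3 → ℝ) :
    star x ⬝ᵥ ((massMO2 + filterMO2 q0 q1) *ᵥ x) =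
      4 * x (0, 0) ^ 2 + 4 / 3 * x (0, 1) ^ 2 + 4 / 3 * x (1, 0) ^ 2 +
        4 / 9 * x (1, 1) ^ 2 + (4 / 15 + q1) * (x (1, 2) ^ 2 + x (2, 1) ^ 2) +
        4 / 5 * (x (0, 2) ^ 2 + x (2, 0) ^ 2) + (4 / 25 + q0) * x (2, 2) ^ 2 -
        6 * q1 * x (2, 2) * (x (0, 2) + x (2, 0)) := by
  simp only [dotProduct, Matrix.mulVec, Pi.star_apply, star_trivial,
    Fintype.sum_prod_type, Fin.sum_univ_three]
  simp only [massMO2, filterMO2, Matrix.add_apply, Matrix.diagonal_apply, Prod.mk.injEq]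
  norm_num [show ((0:Fin 3)=2)=False from by decide, show ((2:Fin 3)=0)=False from by decide,
    show ((1:Fin 3)=2)=False from by decide, show ((2:Fin 3)=1)=False from by decide,
    show ((0:Fin 3)=1)=False from by decide, show ((1:Fin 3)=0)=False from by decide]
  ring

set_option maxHeartbeats 2000000 in
lemma hermMO2 (q0 q1 : ℝ) : (massMO2 + filterMO2 q0 q1).IsHermitian := by
  ext i j
  simp only [Matrix.conjTranspose_apply, Matrix.add_apply, star_trivial,
    massMO2, filterMO2, Matrix.diagonal_apply]
  by_cases h : i = j
  · subst h; rfl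
  · rw [if_neg h, if_neg fun hh => h hh.symm]
    split_ifs <;> first | rfl | tauto

set_option maxHeartbeats 2000000 in

set_option maxHeartbeats 2000000 in
/-- For the degree-2 maximal order basis, `M + Q` is positive definite iff
`q1 > -4/15` and `50 q0 - 1125 q1² + 8 > 0`. -/
theorem stmt_0 (q0 q1 : ℝ) :
    (massMO2 + filterMO2 q0 q1).PosDef ↔
      q1 > -4 / 15 ∧ 50 * q0 - 1125 * q1 ^ 2 + 8 > 0 := by
  constructor
  · intro h
    constructor
    · have h1 := Matrix.PosDef.dotProduct_mulVec_pos h (x := fun p => if p = ((2:Fin 3), (1:Fin 3)) then (1:ℝ) else 0)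
        (fun hc => by have := congrFun hc (2, 1); simp at this)
      rw [quadformMO2] at h1
      norm_num [show (((0:Fin 3),(0:Fin 3)) = ((2:Fin 3),(1:Fin 3))) = False from by decide,
        show (((0:Fin 3),(1:Fin 3)) = ((2:Fin 3),(1:Fin 3))) = False from by decide,
        show (((1:Fin 3),(0:Fin 3)) = ((2:Fin 3),(1:Fin 3))) = False from by decide,
        show (((1:Fin 3),(1:Fin 3)) = ((2:Fin 3),(1:Fin 3))) = False from by decide,
        show (((1:Fin 3),(2:Fin 3)) = ((2:Fin 3),(1:Fin 3))) = False from by decide,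
        show (((0:Fin 3),(2:Fin 3)) = ((2:Fin 3),(1:Fin 3))) = False from by decide,
        show (((2:Fin 3),(0:Fin 3)) = ((2:Fin 3),(1:Fin 3))) = False from by decide,
        show (((2:Fin 3),(2:Fin 3)) = ((2:Fin 3),(1:Fin 3))) = False from by decide,
        show ((0 : Fin 3 × Fin 3) = ((2:Fin 3),(1:Fin 3))) = False from by decide,
        show ((1 : Fin 3 × Fin 3) = ((2:Fin 3),(1:Fin 3))) = False from by decide] at h1
      linarith
    · have h2 := Matrix.PosDef.dotProduct_mulVec_pos h
        (x := fun p => if p = ((2:Fin 3), (0:Fin 3)) ∨ p = ((0:Fin 3), (2:Fin 3)) then 15 * q1 / 4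
          else if p = ((2:Fin 3), (2:Fin 3)) then 1 else 0)
        (fun hc => by have := congrFun hc (2, 2); simp at this)
      rw [quadformMO2] at h2
      norm_num [Prod.ext_iff,
        show ((0:Fin 3)=2)=False from by decide, show ((2:Fin 3)=0)=False from by decide,
        show ((1:Fin 3)=2)=False from by decide, show ((2:Fin 3)=1)=False from by decide,
        show ((0:Fin 3)=1)=False from by decide, show ((1:Fin 3)=0)=False from by decide] at h2
      nlinarith [h2]
  · rintro ⟨h1, h2⟩
    have h1' : (0:ℝ) < 4 / 15 + q1 := by linarith
    have h2' : (0:ℝ) < 50 * q0 - 1125 * q1 ^ 2 + 8 := h2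
    refine Matrix.posDef_iff_dotProduct_mulVec.mpr ⟨hermMO2 q0 q1, fun x hx => ?_⟩
    rw [quadformMO2]
    obtain ⟨i, hi⟩ : ∃ i, x i ≠ 0 := by
      by_contra hc; push_neg at hc; exact hx (funext hc)
    have hu := sq_nonneg (x (0, 2) - 15 / 4 * q1 * x (2, 2))
    have hv := sq_nonneg (x (2, 0) - 15 / 4 * q1 * x (2, 2))
    have hw := mul_nonneg h2'.le (sq_nonneg (x (2, 2)))
    have hp := mul_nonneg h1'.le (sq_nonneg (x (1, 2)))
    have hq := mul_nonneg h1'.le (sq_nonneg (x (2, 1)))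
    have hs : 0 < x i ^ 2 := lt_of_le_of_ne (sq_nonneg _) (Ne.symm (pow_ne_zero 2 hi))
    have n00 := sq_nonneg (x (0, 0))
    have n01 := sq_nonneg (x (0, 1))
    have n10 := sq_nonneg (x (1, 0))
    have n11 := sq_nonneg (x (1, 1))
    fin_cases i
    · replace hs : 0 < x ((0:Fin 3), (0:Fin 3)) ^ 2 := hs
      nlinarith [hu, hv, hw, hp, hq, hs, n01, n10, n11]
    · replace hs : 0 < x ((0:Fin 3), (1:Fin 3)) ^ 2 := hs
      nlinarith [hu, hv, hw, hp, hq, hs, n00, n10, n11]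
    · replace hs : 0 < x ((0:Fin 3), (2:Fin 3)) ^ 2 := hs
      by_cases hz : x (2, 2) = 0
      · rw [hz]; nlinarith [hp, hq, hs, n00, n01, n10, n11, sq_nonneg (x (2, 0))]
      · have hs2 : 0 < x (2, 2) ^ 2 :=
          lt_of_le_of_ne (sq_nonneg _) (Ne.symm (pow_ne_zero 2 hz))
        nlinarith [hu, hv, hp, hq, mul_pos h2' hs2, n00, n01, n10, n11]
    · replace hs : 0 < x ((1:Fin 3), (0:Fin 3)) ^ 2 := hs
      nlinarith [hu, hv, hw, hp, hq, hs, n00, n01, n11]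
    · replace hs : 0 < x ((1:Fin 3), (1:Fin 3)) ^ 2 := hs
      nlinarith [hu, hv, hw, hp, hq, hs, n00, n01, n10]
    · replace hs : 0 < x ((1:Fin 3), (2:Fin 3)) ^ 2 := hs
      nlinarith [hu, hv, hw, hq, mul_pos h1' hs, n00, n01, n10, n11]
    · replace hs : 0 < x ((2:Fin 3), (0:Fin 3)) ^ 2 := hs
      by_cases hz : x (2, 2) = 0
      · rw [hz]; nlinarith [hp, hq, hs, n00, n01, n10, n11, sq_nonneg (x (0, 2))]
      · have hs2 : 0 < x (2, 2) ^ 2 :=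
          lt_of_le_of_ne (sq_nonneg _) (Ne.symm (pow_ne_zero 2 hz))
        nlinarith [hu, hv, hp, hq, mul_pos h2' hs2, n00, n01, n10, n11]
    · replace hs : 0 < x ((2:Fin 3), (1:Fin 3)) ^ 2 := hs
      nlinarith [hu, hv, hw, hp, mul_pos h1' hs, n00, n01, n10, n11]
    · replace hs : 0 < x ((2:Fin 3), (2:Fin 3)) ^ 2 := hs
      nlinarith [hu, hv, hp, hq, mul_pos h2' hs, n00, n01, n10, n11]
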